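/- arXiv:1712.08984 — 3 statements merged into one kernel-verified Lean document; each statement's English description precedes it below -/
import Mathlib

section
/- Let m be a positive integer such that q = 2m² + 2m + 1 is a prime power, and let C := C_0^{(2,q)} be the set of nonzero squares of F_q. Suppose D₀, D₁ ⊆ F_q satisfy |D₀| = m², |D₁| = m² + m + 1, and for every j ∈ F_q: |D₀ ∩ ((C∪{0}) + j)| + |D₁ ∩ (C + j)| ∈ {m², m²+1, m²+m+1, m²+m+2} and |D₀ ∩ (C + j)| + |D₁ ∩ ((F_q∖(C∪{0})) + j)| ∈ {m²−1, m², m²+m, m²+m+1}. Then there exists an Hadamard matrix of order n = 4(m² + m + 1) each of whose row sums equals either 2m or 2m + 4. -/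
set_option linter.unusedSectionVars false

namespace Stmt14Aux
open Finset

variable {F : Type} [Field F] [Fintype F] [DecidableEq F]

noncomputable def chi (x : F) : ℤ := quadraticChar F x

lemma chi_zero : chi (0 : F) = 0 := by simp [chi]

lemma chi_dichotomy {x : F} (hx : x ≠ 0) : chi x = 1 ∨ chi x = -1 :=
  quadraticChar_dichotomy hx

lemma chi_sq {x : F} (hx : x ≠ 0) : chi x * chi x = 1 := by
  rcases chi_dichotomy hx with h | h <;> rw [h] <;> norm_num

lemma chi_mul (x y : F) : chi (x * y) = chi x * chi y := by
  simp [chi, map_mul]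

lemma sum_chi (hF : ringChar F ≠ 2) : ∑ x : F, chi x = 0 := by
  simpa [chi] using quadraticChar_sum_zero (F := F) hF

lemma paley (hF : ringChar F ≠ 2) {b : F} (hb : b ≠ 0) :
    ∑ x : F, chi x * chi (x + b) = -1 := by
  have h0 : ∑ x : F, chi x * chi (x + b) = ∑ x ∈ univ.erase (0 : F), chi x * chi (x + b) := by
    rw [Finset.sum_erase_eq_sub (mem_univ _)]
    simp [chi_zero]
  rw [h0]
  have key : ∀ x ∈ univ.erase (0 : F), chi x * chi (x + b) = chi (1 + b * x⁻¹) := by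
    intro x hx
    have hx0 : x ≠ 0 := by simpa using (Finset.mem_erase.mp hx).1
    have : x + b = x * (1 + b * x⁻¹) := by field_simp
    rw [this, chi_mul, ← mul_assoc, chi_sq hx0, one_mul]
  rw [Finset.sum_congr rfl key]
  have hbij : ∑ x ∈ univ.erase (0 : F), chi (1 + b * x⁻¹)
      = ∑ y ∈ univ.erase (1 : F), chi y := by
    apply Finset.sum_nbij' (fun x => 1 + b * x⁻¹) (fun y => b * (y - 1)⁻¹)
    · intro x hx
      have hx0 : x ≠ 0 := by simpa using (Finset.mem_erase.mp hx).1
      simp only [mem_erase, mem_univ, and_true]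
      intro h
      have : b * x⁻¹ = 0 := by linear_combination h
      rcases mul_eq_zero.mp this with h' | h'
      · exact hb h'
      · exact hx0 (inv_eq_zero.mp h')
    · intro y hy
      have hy1 : y ≠ 1 := by simpa using (Finset.mem_erase.mp hy).1
      simp only [mem_erase, mem_univ, and_true]
      intro h
      rcases mul_eq_zero.mp h with h' | h'
      · exact hb h'
      · exact hy1 (by rwa [inv_eq_zero, sub_eq_zero] at h')
    · intro x hx
      have hx0 : x ≠ 0 := by simpa using (Finset.mem_erase.mp hx).1
      field_simp
      simp [hb]
    · intro y hy
      have hy1 : y ≠ 1 := by simpa using (Finset.mem_erase.mp hy).1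
      have : y - 1 ≠ 0 := sub_ne_zero.mpr hy1
      field_simp
      ring
    · intro x hx; rfl
  rw [hbij, Finset.sum_erase_eq_sub (mem_univ _), sum_chi hF]
  simp [chi]

lemma chi_neg_one (h4 : Fintype.card F % 4 = 1) : chi (-1 : F) = 1 := by
  have hF : ringChar F ≠ 2 := by
    intro h
    have := FiniteField.even_card_of_char_two (F := F) h
    omega
  have hsq : IsSquare (-1 : F) := FiniteField.isSquare_neg_one_iff.mpr (by omega)
  have hne : (-1 : F) ≠ 0 := by
    intro h
    exact one_ne_zero (neg_eq_zero.mp h)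
  exact (quadraticChar_one_iff_isSquare hne).mpr hsq

lemma chi_sub_symm (h4 : Fintype.card F % 4 = 1) (a b : F) : chi (a - b) = chi (b - a) := by
  have : a - b = (-1) * (b - a) := by ring
  rw [this, chi_mul, chi_neg_one h4, one_mul]

/-! ### The conference-type matrix `K` -/

noncomputable def K : Option F → Option F → ℤ
  | none, none => 0
  | none, some _ => 1
  | some _, none => 1
  | some a, some b => chi (b - a)

lemma K_symm (h4 : Fintype.card F % 4 = 1) (u v : Option F) : K v u = K u v := by
  cases u <;> cases v <;> simp [K, chi_sub_symm h4]

lemma K_diag (u : Option F) : K u u = 0 := by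
  cases u <;> simp [K, chi_zero]

lemma K_offdiag {u v : Option F} (h : u ≠ v) : K u v = 1 ∨ K u v = -1 := by
  cases u with
  | none => cases v with
    | none => exact absurd rfl h
    | some b => left; rfl
  | some a => cases v with
    | none => left; rfl
    | some b =>
      have : b - a ≠ 0 := sub_ne_zero.mpr (fun hh => h (by rw [hh]))
      exact chi_dichotomy this

lemma sum_chi_shift (hF : ringChar F ≠ 2) (a : F) : ∑ b : F, chi (b - a) = 0 := by
  rw [← sum_chi hF]
  exact Fintype.sum_equiv (Equiv.subRight a) _ _ (fun b => rfl)

lemma KK (hF : ringChar F ≠ 2) (u u' : Option F) :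
    ∑ v : Option F, K u v * K u' v =
      if u = u' then (Fintype.card F : ℤ) else 0 := by
  cases u with
  | none =>
    cases u' with
    | none => simp [Fintype.sum_option, K]
    | some a' =>
      simp only [Fintype.sum_option, K, reduceCtorEq, if_false, zero_mul, one_mul, zero_add]
      exact sum_chi_shift hF a'
  | some a =>
    cases u' with
    | none =>
      simp only [Fintype.sum_option, K, reduceCtorEq, if_false, mul_zero, one_mul, mul_one,
        zero_add]
      exact sum_chi_shift hF a
    | some a' =>
      by_cases h : a = a'
      · subst h
        simp only [Fintype.sum_option, K, if_pos rfl, one_mul]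
        have : ∀ b : F, chi (b - a) * chi (b - a) = if b = a then 0 else 1 := by
          intro b
          by_cases hb : b = a
          · simp [hb, chi_zero]
          · simp [hb, chi_sq (sub_ne_zero.mpr hb)]
        rw [Finset.sum_congr rfl (fun b _ => this b)]
        have h2 : ∑ b : F, (if b = a then (0:ℤ) else 1)
            = ∑ b : F, ((1:ℤ) - if b = a then 1 else 0) :=
          Finset.sum_congr rfl (fun b _ => by split <;> ring)
        rw [h2, Finset.sum_sub_distrib, Finset.sum_const,
          Finset.sum_ite_eq' univ a (fun _ => (1:ℤ))]
        simp [Finset.card_univ]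
      · have hne : (some a : Option F) ≠ some a' := by simpa using h
        simp only [Fintype.sum_option, K, if_neg hne, one_mul]
        have : ∑ b : F, chi (b - a) * chi (b - a') = -1 := by
          have h' : a - a' ≠ 0 := sub_ne_zero.mpr h
          calc ∑ b : F, chi (b - a) * chi (b - a')
              = ∑ x : F, chi x * chi (x + (a - a')) := by
                refine Fintype.sum_equiv (Equiv.subRight a) _ _ (fun b => ?_)
                simp [Equiv.subRight]
            _ = -1 := paley hF h'
        rw [this]
        ring

/-! ### The doubled block matrix `M` -/

def cc : Fin 2 → Fin 2 → ℤ := fun s t => if s = 1 ∧ t = 1 then -1 else 1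
def dd : Fin 2 → Fin 2 → ℤ := fun s t => if s = 0 ∧ t = 0 then 1 else -1

noncomputable def M : (Fin 2 × Option F) → (Fin 2 × Option F) → ℤ :=
  fun r c => cc r.1 c.1 * K r.2 c.2 + dd r.1 c.1 * (if r.2 = c.2 then 1 else 0)

lemma cc_pm (s t : Fin 2) : cc s t = 1 ∨ cc s t = -1 := by
  unfold cc; split <;> simp

lemma dd_pm (s t : Fin 2) : dd s t = 1 ∨ dd s t = -1 := by
  unfold dd; split <;> simp

lemma M_pm (r c : Fin 2 × Option F) : M r c = 1 ∨ M r c = -1 := by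
  by_cases h : r.2 = c.2
  · have : M r c = dd r.1 c.1 := by simp [M, h, K_diag]
    rw [this]; exact dd_pm _ _
  · have : M r c = cc r.1 c.1 * K r.2 c.2 := by simp [M, h]
    rw [this]
    rcases cc_pm r.1 c.1 with h1 | h1 <;> rcases K_offdiag h with h2 | h2 <;>
      rw [h1, h2] <;> norm_num

lemma sum_v (s s' t : Fin 2) (u u' : Option F) :
    ∑ v : Option F, M (s,u) (t,v) * M (s',u') (t,v)
      = (cc s t * cc s' t) * (∑ v : Option F, K u v * K u' v)
        + (cc s t * dd s' t) * K u u' + (dd s t * cc s' t) * K u' u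
        + (dd s t * dd s' t) * (if u = u' then 1 else 0) := by
  have expand : ∀ v : Option F, M (s,u) (t,v) * M (s',u') (t,v) =
      (cc s t * cc s' t) * (K u v * K u' v)
      + (cc s t * dd s' t) * (if u' = v then K u v else 0)
      + (dd s t * cc s' t) * (if u = v then K u' v else 0)
      + (dd s t * dd s' t) * (if u = v then (if u' = v then (1:ℤ) else 0) else 0) := by
    intro v
    simp only [M]
    by_cases h1 : u = v <;> by_cases h2 : u' = v <;> simp [h1, h2] <;> ring
  rw [Finset.sum_congr rfl (fun v _ => expand v)]
  rw [Finset.sum_add_distrib, Finset.sum_add_distrib, Finset.sum_add_distrib]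
  rw [← Finset.mul_sum, ← Finset.mul_sum, ← Finset.mul_sum, ← Finset.mul_sum]
  congr 1
  · congr 1
    · congr 1
      rw [Finset.sum_ite_eq univ u' (fun v => K u v)]
      simp
    · congr 1
      rw [Finset.sum_ite_eq univ u (fun v => K u' v)]
      simp
  · congr 1
    rw [Finset.sum_ite_eq univ u (fun v => if u' = v then (1:ℤ) else 0)]
    simp [eq_comm]

lemma MM_orth (hF : ringChar F ≠ 2) (h4 : Fintype.card F % 4 = 1)
    (r r' : Fin 2 × Option F) :
    ∑ c : Fin 2 × Option F, M r c * M r' c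
      = if r = r' then 2 * ((Fintype.card F : ℤ) + 1) else 0 := by
  obtain ⟨s, u⟩ := r
  obtain ⟨s', u'⟩ := r'
  rw [Fintype.sum_prod_type]
  rw [Fin.sum_univ_two]
  rw [sum_v, sum_v, KK hF, K_symm h4 u' u]
  simp only [Prod.mk.injEq]
  fin_cases s <;> fin_cases s' <;>
    simp only [cc, dd, Fin.isValue, show ((0:Fin 2) = 1) = False by simp,
      show ((1:Fin 2) = 0) = False by simp, true_and, false_and, and_true, and_false,
      if_true, if_false, true_iff, iff_true] <;>
    by_cases h : u = u' <;> simp [h, K_diag] <;> ring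

/-! ### Squares, nonsquares and counting -/

open Classical in
noncomputable def SQ (F : Type) [Field F] [Fintype F] : Finset F :=
  univ.filter (fun x => x ≠ 0 ∧ IsSquare x)

lemma mem_SQ {x : F} : x ∈ SQ F ↔ x ≠ 0 ∧ IsSquare x := by
  classical
  simp [SQ]

open Classical in
noncomputable def NStr (F : Type) [Field F] [Fintype F] : Finset F :=
  univ \ (SQ F ∪ {0})

lemma chi_eq_sq {x : F} (h : x ≠ 0 ∧ IsSquare x) : chi x = 1 :=
  (quadraticChar_one_iff_isSquare h.1).mpr h.2

lemma chi_eq_nsq {x : F} (h : ¬ IsSquare x) : chi x = -1 :=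
  quadraticChar_neg_one_iff_not_isSquare.mpr h

lemma mem_img_SQ {a b : F} : b ∈ (SQ F).image (· + a) ↔ (b - a ≠ 0 ∧ IsSquare (b - a)) := by
  rw [Finset.mem_image]
  constructor
  · rintro ⟨x, hx, rfl⟩
    simpa [add_sub_cancel_right] using mem_SQ.mp hx
  · intro h
    exact ⟨b - a, mem_SQ.mpr h, by ring⟩

lemma mem_img_NS {a b : F} :
    b ∈ (NStr F).image (· + a) ↔ (b - a ≠ 0 ∧ ¬ IsSquare (b - a)) := by
  classical
  rw [Finset.mem_image]
  constructor
  · rintro ⟨x, hx, rfl⟩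
    simp only [NStr, Finset.mem_sdiff, Finset.mem_union, Finset.mem_singleton, mem_univ,
      true_and, mem_SQ, add_sub_cancel_right] at hx ⊢
    tauto
  · rintro ⟨h1, h2⟩
    refine ⟨b - a, ?_, by ring⟩
    simp only [NStr, Finset.mem_sdiff, Finset.mem_union, Finset.mem_singleton, mem_univ,
      true_and, mem_SQ]
    tauto

lemma sum_chi_D_sq (D : Finset F) (a : F) :
    ∑ b ∈ D, chi (b - a)
      = 2 * ((D ∩ (SQ F).image (· + a)).card : ℤ)
        + (if a ∈ D then 1 else 0) - D.card := by
  have hpt : ∀ b ∈ D, chi (b - a)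
      = (if b ∈ (SQ F).image (· + a) then (2:ℤ) else 0) + (if b = a then 1 else 0) - 1 := by
    intro b _
    by_cases h1 : b ∈ (SQ F).image (· + a)
    · have hmem := mem_img_SQ.mp h1
      have hba : b ≠ a := fun h => hmem.1 (by rw [h, sub_self])
      rw [chi_eq_sq hmem, if_pos h1, if_neg hba]; ring
    · by_cases h2 : b = a
      · subst h2; rw [sub_self, chi_zero, if_neg h1, if_pos rfl]; ring
      · have hne : b - a ≠ 0 := sub_ne_zero.mpr h2
        have hns : ¬ IsSquare (b - a) := fun hs => h1 (mem_img_SQ.mpr ⟨hne, hs⟩)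
        rw [chi_eq_nsq hns, if_neg h1, if_neg h2]; ring
  rw [Finset.sum_congr rfl hpt]
  rw [Finset.sum_sub_distrib, Finset.sum_add_distrib, Finset.sum_const]
  congr 1
  congr 1
  · rw [← Finset.sum_filter, Finset.filter_mem_eq_inter, Finset.sum_const]
    simp [mul_comm]
  · rw [Finset.sum_ite_eq' D a (fun _ => (1:ℤ))]
  · simp

lemma sum_chi_D_ns (D : Finset F) (a : F) :
    ∑ b ∈ D, chi (b - a)
      = (D.card : ℤ) - (if a ∈ D then 1 else 0)
        - 2 * ((D ∩ (NStr F).image (· + a)).card : ℤ) := by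
  have hpt : ∀ b ∈ D, chi (b - a)
      = 1 - (if b = a then 1 else 0) - (if b ∈ (NStr F).image (· + a) then (2:ℤ) else 0) := by
    intro b _
    by_cases h1 : b ∈ (NStr F).image (· + a)
    · have hmem := mem_img_NS.mp h1
      have hba : b ≠ a := fun h => hmem.1 (by rw [h, sub_self])
      rw [chi_eq_nsq hmem.2, if_pos h1, if_neg hba]; ring
    · by_cases h2 : b = a
      · subst h2; rw [sub_self, chi_zero, if_neg h1, if_pos rfl]; ring
      · have hne : b - a ≠ 0 := sub_ne_zero.mpr h2
        have hsq : IsSquare (b - a) := by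
          by_contra hns
          exact h1 (mem_img_NS.mpr ⟨hne, hns⟩)
        rw [chi_eq_sq ⟨hne, hsq⟩, if_neg h1, if_neg h2]; ring
  rw [Finset.sum_congr rfl hpt]
  rw [Finset.sum_sub_distrib, Finset.sum_sub_distrib, Finset.sum_const]
  congr 1
  congr 1
  · simp
  · rw [Finset.sum_ite_eq' D a (fun _ => (1:ℤ))]
  · rw [← Finset.sum_filter, Finset.filter_mem_eq_inter, Finset.sum_const]
    simp [mul_comm]

/-! ### Column signs and row sums -/

noncomputable def epsc (D0 D1 : Finset F) : Fin 2 × Option F → ℤ :=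
  fun c => match c with
  | (_, none) => 1
  | (t, some b) => if b ∈ (if t = 0 then D0 else D1) then -1 else 1

lemma epsc_pm (D0 D1 : Finset F) (c : Fin 2 × Option F) :
    epsc D0 D1 c = 1 ∨ epsc D0 D1 c = -1 := by
  obtain ⟨t, v⟩ := c
  cases v with
  | none => left; rfl
  | some b =>
    simp only [epsc]
    split <;> split <;> simp

noncomputable def Rsum (D0 D1 : Finset F) (r : Fin 2 × Option F) : ℤ :=
  ∑ c : Fin 2 × Option F, M r c * epsc D0 D1 c

lemma sum_pm (D : Finset F) :
    ∑ b : F, (if b ∈ D then (-1:ℤ) else 1) = (Fintype.card F : ℤ) - 2 * D.card := by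
  have h : ∀ b : F, (if b ∈ D then (-1:ℤ) else 1)
      = 1 - 2 * (if b ∈ D then 1 else 0) := fun b => by split <;> ring
  rw [Finset.sum_congr rfl (fun b _ => h b), Finset.sum_sub_distrib, Finset.sum_const,
    ← Finset.mul_sum, Finset.sum_ite_mem, Finset.univ_inter, Finset.sum_const]
  simp [card_univ, mul_comm]

lemma sum_chi_pm (hF : ringChar F ≠ 2) (D : Finset F) (a : F) :
    ∑ b : F, chi (b - a) * (if b ∈ D then (-1:ℤ) else 1)
      = - 2 * ∑ b ∈ D, chi (b - a) := by
  have h : ∀ b : F, chi (b - a) * (if b ∈ D then (-1:ℤ) else 1)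
      = chi (b - a) - 2 * (if b ∈ D then chi (b - a) else 0) := fun b => by split <;> ring
  rw [Finset.sum_congr rfl (fun b _ => h b), Finset.sum_sub_distrib, sum_chi_shift hF,
    ← Finset.mul_sum, Finset.sum_ite_mem, Finset.univ_inter]
  ring

lemma G_none (D0 D1 : Finset F) (t : Fin 2) :
    ∑ v : Option F, K (none : Option F) v * epsc D0 D1 (t, v)
      = (Fintype.card F : ℤ) - 2 * (if t = 0 then D0 else D1).card := by
  rw [Fintype.sum_option]
  simp only [K, zero_mul, zero_add, one_mul, epsc]
  exact sum_pm _

lemma G_some (hF : ringChar F ≠ 2) (D0 D1 : Finset F) (t : Fin 2) (a : F) :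
    ∑ v : Option F, K (some a) v * epsc D0 D1 (t, v)
      = 1 - 2 * ∑ b ∈ (if t = 0 then D0 else D1), chi (b - a) := by
  rw [Fintype.sum_option]
  simp only [K, one_mul, epsc]
  rw [sum_chi_pm hF]
  ring

lemma Rsum_expand (D0 D1 : Finset F) (s : Fin 2) (u : Option F) :
    Rsum D0 D1 (s, u)
      = ∑ t : Fin 2, (cc s t * (∑ v : Option F, K u v * epsc D0 D1 (t, v))
          + dd s t * epsc D0 D1 (t, u)) := by
  unfold Rsum
  rw [Fintype.sum_prod_type]
  refine Finset.sum_congr rfl (fun t _ => ?_)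
  have h : ∀ v : Option F, M (s, u) (t, v) * epsc D0 D1 (t, v)
      = cc s t * (K u v * epsc D0 D1 (t, v))
        + dd s t * (if u = v then epsc D0 D1 (t, v) else 0) := by
    intro v
    simp only [M]
    by_cases huv : u = v <;> simp [huv] <;> ring
  rw [Finset.sum_congr rfl (fun v _ => h v), Finset.sum_add_distrib,
    ← Finset.mul_sum, ← Finset.mul_sum, Finset.sum_ite_eq univ u (fun v => epsc D0 D1 (t, v))]
  simp

lemma card_inter_union_img (D : Finset F) (a : F) :
    ((D ∩ ((SQ F ∪ {0}).image (· + a))).card : ℤ)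
      = ((D ∩ (SQ F).image (· + a)).card : ℤ) + (if a ∈ D then 1 else 0) := by
  classical
  have himg : (SQ F ∪ {0} : Finset F).image (· + a) = (SQ F).image (· + a) ∪ {a} := by
    rw [Finset.image_union]
    simp
  rw [himg, Finset.inter_union_distrib_left]
  have hdisj : Disjoint (D ∩ (SQ F).image (· + a)) (D ∩ {a}) := by
    rw [Finset.disjoint_left]
    intro x hx hx'
    have h1 := Finset.mem_inter.mp hx
    have h2 := Finset.mem_inter.mp hx'
    have hxa : x = a := Finset.mem_singleton.mp h2.2
    have := mem_img_SQ.mp h1.2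
    rw [hxa, sub_self] at this
    exact this.1 rfl
  rw [Finset.card_union_of_disjoint hdisj]
  push_cast
  congr 1
  by_cases h : a ∈ D
  · rw [if_pos h, Finset.inter_singleton_of_mem h]
    simp
  · rw [if_neg h, Finset.inter_singleton_of_notMem h]
    simp

lemma Rsum_0_none (D0 D1 : Finset F) :
    Rsum D0 D1 (0, none)
      = 2 * (Fintype.card F : ℤ) - 2 * D0.card - 2 * D1.card := by
  rw [Rsum_expand, Fin.sum_univ_two, G_none, G_none]
  simp only [epsc, cc, dd]
  norm_num
  ring

lemma Rsum_1_none (D0 D1 : Finset F) :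
    Rsum D0 D1 (1, none) = 2 * (D1.card : ℤ) - 2 * D0.card - 2 := by
  rw [Rsum_expand, Fin.sum_univ_two, G_none, G_none]
  simp only [epsc, cc, dd]
  norm_num
  ring

lemma Rsum_0_some (hF : ringChar F ≠ 2) (D0 D1 : Finset F) (a : F) :
    Rsum D0 D1 (0, some a)
      = 2 + 2 * ((D0.card : ℤ) + D1.card)
        - 4 * (((D0 ∩ ((SQ F ∪ {0}).image (· + a))).card : ℤ)
          + ((D1 ∩ (SQ F).image (· + a)).card : ℤ)) := by
  rw [Rsum_expand, Fin.sum_univ_two, G_some hF, G_some hF]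
  simp only [epsc, cc, dd, Fin.isValue, reduceIte, reduceCtorEq, one_ne_zero, and_self,
    and_false, false_and, if_true, if_false, show ((0:Fin 2) = 0) = True by simp,
    show ((1:Fin 2) = 0) = False by simp, show ((0:Fin 2) = 1) = False by simp,
    show ((1:Fin 2) = 1) = True by simp]
  rw [sum_chi_D_sq D0 a, sum_chi_D_sq D1 a, card_inter_union_img D0 a]
  by_cases h0 : a ∈ D0 <;> by_cases h1 : a ∈ D1 <;>
    simp only [h0, h1, if_true, if_false] <;> ring

lemma Rsum_1_some (hF : ringChar F ≠ 2) (D0 D1 : Finset F) (a : F) :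
    Rsum D0 D1 (1, some a)
      = 2 * (D0.card : ℤ) + 2 * D1.card - 2
        - 4 * (((D0 ∩ (SQ F).image (· + a)).card : ℤ)
          + ((D1 ∩ (NStr F).image (· + a)).card : ℤ)) := by
  rw [Rsum_expand, Fin.sum_univ_two, G_some hF, G_some hF]
  simp only [epsc, cc, dd, Fin.isValue, reduceIte, reduceCtorEq, one_ne_zero, and_self,
    and_false, false_and, if_true, if_false, show ((0:Fin 2) = 0) = True by simp,
    show ((1:Fin 2) = 0) = False by simp, show ((0:Fin 2) = 1) = False by simp,
    show ((1:Fin 2) = 1) = True by simp]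
  rw [sum_chi_D_sq D0 a, sum_chi_D_ns D1 a]
  by_cases h0 : a ∈ D0 <;> by_cases h1 : a ∈ D1 <;>
    simp only [h0, h1, if_true, if_false] <;> ring

end Stmt14Aux
/-- STATEMENT 13: Suitable intersection conditions on a pair `D₀, D₁ ⊆ F_q`,
`q = 2m²+2m+1`, yield a biregular Hadamard matrix of order `4(m²+m+1)` with row sums
`2m` or `2m+4`. -/
theorem stmt_14 (m : ℕ) (hm : 0 < m)
    (F : Type) [Field F] [Fintype F] (hF : Fintype.card F = 2 * m ^ 2 + 2 * m + 1)
    (C : Set F) (hC : C = {x : F | x ≠ 0 ∧ IsSquare x})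
    (D₀ D₁ : Set F) (hD₀ : D₀.ncard = m ^ 2) (hD₁ : D₁.ncard = m ^ 2 + m + 1)
    (hint1 : ∀ j : F,
      (D₀ ∩ ((fun x => x + j) '' (C ∪ {0}))).ncard + (D₁ ∩ ((fun x => x + j) '' C)).ncard ∈
        ({m ^ 2, m ^ 2 + 1, m ^ 2 + m + 1, m ^ 2 + m + 2} : Set ℕ))
    (hint2 : ∀ j : F,
      (D₀ ∩ ((fun x => x + j) '' C)).ncard +
          (D₁ ∩ ((fun x => x + j) '' (Set.univ \ (C ∪ {0})))).ncard ∈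
        ({m ^ 2 - 1, m ^ 2, m ^ 2 + m, m ^ 2 + m + 1} : Set ℕ)) :
    ∃ H : Matrix (Fin (4 * (m ^ 2 + m + 1))) (Fin (4 * (m ^ 2 + m + 1))) ℤ,
      (∀ i j, H i j = 1 ∨ H i j = -1) ∧
      H * H.transpose = ((4 * (m ^ 2 + m + 1) : ℕ) : ℤ) • (1 : Matrix _ _ ℤ) ∧
      (∀ i, (∑ j, H i j) = 2 * (m : ℤ) ∨ (∑ j, H i j) = 2 * (m : ℤ) + 4) := by
  classical
  open Stmt14Aux in
  -- arithmetic facts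
  have hm2 : 1 ≤ m ^ 2 := Nat.one_le_pow _ _ hm
  have hchar : ringChar F ≠ 2 := by
    intro h
    have := FiniteField.even_card_of_char_two (F := F) h
    rw [hF] at this
    omega
  have h4 : Fintype.card F % 4 = 1 := by
    rw [hF]
    obtain ⟨k, hk⟩ := Nat.even_mul_succ_self m
    have hmm : m ^ 2 + m = k + k := by nlinarith [hk]
    omega
  -- finsets
  have hD₀fin : D₀.Finite := Set.toFinite _
  have hD₁fin : D₁.Finite := Set.toFinite _
  set d0 := hD₀fin.toFinset with hd0
  set d1 := hD₁fin.toFinset with hd1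
  have hcoe0 : (d0 : Set F) = D₀ := hD₀fin.coe_toFinset
  have hcoe1 : (d1 : Set F) = D₁ := hD₁fin.coe_toFinset
  have hcard0 : d0.card = m ^ 2 := by
    rw [hd0, ← Set.ncard_eq_toFinset_card D₀ hD₀fin]; exact hD₀
  have hcard1 : d1.card = m ^ 2 + m + 1 := by
    rw [hd1, ← Set.ncard_eq_toFinset_card D₁ hD₁fin]; exact hD₁
  have hCS : C = ↑(SQ F) := by
    ext x
    rw [hC]
    simp [Stmt14Aux.mem_SQ]
  -- translated intersection hypotheses
  have hint1' : ∀ j : F,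
      (d0 ∩ ((SQ F ∪ {0}).image (· + j))).card + (d1 ∩ ((SQ F).image (· + j))).card ∈
        ({m ^ 2, m ^ 2 + 1, m ^ 2 + m + 1, m ^ 2 + m + 2} : Set ℕ) := by
    intro j
    have h1 : (D₀ ∩ ((fun x => x + j) '' (C ∪ {0})))
        = ↑(d0 ∩ ((SQ F ∪ {0}).image (· + j))) := by
      rw [Finset.coe_inter, Finset.coe_image, Finset.coe_union, Finset.coe_singleton,
        hcoe0, ← hCS]
    have h2 : (D₁ ∩ ((fun x => x + j) '' C)) = ↑(d1 ∩ ((SQ F).image (· + j))) := by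
      rw [Finset.coe_inter, Finset.coe_image, hcoe1, ← hCS]
    have := hint1 j
    rwa [h1, h2, Set.ncard_coe_finset, Set.ncard_coe_finset] at this
  have hint2' : ∀ j : F,
      (d0 ∩ ((SQ F).image (· + j))).card + (d1 ∩ ((NStr F).image (· + j))).card ∈
        ({m ^ 2 - 1, m ^ 2, m ^ 2 + m, m ^ 2 + m + 1} : Set ℕ) := by
    intro j
    have h1 : (D₀ ∩ ((fun x => x + j) '' C)) = ↑(d0 ∩ ((SQ F).image (· + j))) := by
      rw [Finset.coe_inter, Finset.coe_image, hcoe0, ← hCS]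
    have h2 : (D₁ ∩ ((fun x => x + j) '' (Set.univ \ (C ∪ {0}))))
        = ↑(d1 ∩ ((NStr F).image (· + j))) := by
      rw [Finset.coe_inter, Finset.coe_image, hcoe1]
      congr 2
      rw [Stmt14Aux.NStr, Finset.coe_sdiff, Finset.coe_union, Finset.coe_singleton,
        Finset.coe_univ, hCS]
    have := hint2 j
    rwa [h1, h2, Set.ncard_coe_finset, Set.ncard_coe_finset] at this
  -- the index equivalence
  have hcardI : Fintype.card (Fin 2 × Option F) = 4 * (m ^ 2 + m + 1) := by
    rw [Fintype.card_prod, Fintype.card_option, Fintype.card_fin, hF]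
    ring
  obtain ⟨e⟩ : Nonempty (Fin (4 * (m ^ 2 + m + 1)) ≃ (Fin 2 × Option F)) :=
    ⟨(Fintype.equivFinOfCardEq hcardI).symm⟩
  refine ⟨fun i j =>
    (if 0 ≤ Rsum d0 d1 (e i) then (1:ℤ) else -1) * M (e i) (e j) * epsc d0 d1 (e j),
    ?_, ?_, ?_⟩
  · -- entries are ±1
    intro i j
    beta_reduce
    have h1 : (if 0 ≤ Rsum d0 d1 (e i) then (1:ℤ) else -1) = 1 ∨
        (if 0 ≤ Rsum d0 d1 (e i) then (1:ℤ) else -1) = -1 := by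
      split <;> simp
    rcases h1 with h1 | h1 <;> rcases M_pm (e i) (e j) with h2 | h2 <;>
      rcases epsc_pm d0 d1 (e j) with h3 | h3 <;> rw [h1, h2, h3] <;> norm_num
  · -- orthogonality
    ext i j
    erw [Matrix.mul_apply]
    dsimp only [Matrix.transpose, Matrix.of_apply]
    beta_reduce
    have hstep : ∀ k,
        ((if 0 ≤ Rsum d0 d1 (e i) then (1:ℤ) else -1) * M (e i) (e k) * epsc d0 d1 (e k)) *
        ((if 0 ≤ Rsum d0 d1 (e j) then (1:ℤ) else -1) * M (e j) (e k) * epsc d0 d1 (e k))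
        = (if 0 ≤ Rsum d0 d1 (e i) then (1:ℤ) else -1) *
            (if 0 ≤ Rsum d0 d1 (e j) then (1:ℤ) else -1) *
            (M (e i) (e k) * M (e j) (e k)) := by
      intro k
      have h3 : epsc d0 d1 (e k) * epsc d0 d1 (e k) = 1 := by
        rcases epsc_pm d0 d1 (e k) with h | h <;> rw [h] <;> norm_num
      calc ((if 0 ≤ Rsum d0 d1 (e i) then (1:ℤ) else -1) * M (e i) (e k) * epsc d0 d1 (e k)) *
            ((if 0 ≤ Rsum d0 d1 (e j) then (1:ℤ) else -1) * M (e j) (e k) * epsc d0 d1 (e k))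
          = (if 0 ≤ Rsum d0 d1 (e i) then (1:ℤ) else -1) *
              (if 0 ≤ Rsum d0 d1 (e j) then (1:ℤ) else -1) *
              (M (e i) (e k) * M (e j) (e k)) * (epsc d0 d1 (e k) * epsc d0 d1 (e k)) := by
            ring
        _ = (if 0 ≤ Rsum d0 d1 (e i) then (1:ℤ) else -1) *
              (if 0 ≤ Rsum d0 d1 (e j) then (1:ℤ) else -1) *
              (M (e i) (e k) * M (e j) (e k)) := by rw [h3, mul_one]
    rw [Finset.sum_congr rfl (fun k _ => hstep k), ← Finset.mul_sum]
    have hre : ∑ k, M (e i) (e k) * M (e j) (e k) = ∑ c, M (e i) c * M (e j) c :=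
      Equiv.sum_comp e (fun c => M (e i) c * M (e j) c)
    rw [hre, MM_orth hchar h4]
    by_cases hij : i = j
    · subst hij
      rw [if_pos rfl]
      have hsq : (if 0 ≤ Rsum d0 d1 (e i) then (1:ℤ) else -1) *
          (if 0 ≤ Rsum d0 d1 (e i) then (1:ℤ) else -1) = 1 := by
        split <;> norm_num
      rw [hsq, one_mul, Matrix.smul_apply, Matrix.one_apply_eq, smul_eq_mul, mul_one, hF]
      push_cast
      ring
    · have hne : e i ≠ e j := fun h => hij (e.injective h)
      rw [if_neg hne, mul_zero, Matrix.smul_apply, Matrix.one_apply_ne hij, smul_eq_mul,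
        mul_zero]
  · -- row sums
    intro i
    beta_reduce
    have hsum : ∑ j, (if 0 ≤ Rsum d0 d1 (e i) then (1:ℤ) else -1) * M (e i) (e j) *
        epsc d0 d1 (e j)
        = (if 0 ≤ Rsum d0 d1 (e i) then (1:ℤ) else -1) * Rsum d0 d1 (e i) := by
      have h : ∀ j, (if 0 ≤ Rsum d0 d1 (e i) then (1:ℤ) else -1) * M (e i) (e j) *
          epsc d0 d1 (e j)
          = (if 0 ≤ Rsum d0 d1 (e i) then (1:ℤ) else -1) *
              (M (e i) (e j) * epsc d0 d1 (e j)) := fun j => by ring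
      rw [Finset.sum_congr rfl (fun j _ => h j), ← Finset.mul_sum]
      congr 1
      exact Equiv.sum_comp e (fun c => M (e i) c * epsc d0 d1 c)
    rw [hsum]
    have hmz : (0:ℤ) < m := by exact_mod_cast hm
    generalize e i = r
    obtain ⟨s, u⟩ := r
    have hs : s = 0 ∨ s = 1 := by omega
    cases u with
    | none =>
      rcases hs with rfl | rfl
      · have hR : Rsum d0 d1 ((0 : Fin 2), (none : Option F)) = 2 * (m:ℤ) := by
          rw [Rsum_0_none, hF, hcard0, hcard1]
          push_cast
          ring
        left
        rw [hR, if_pos (by linarith), one_mul]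
      · have hR : Rsum d0 d1 ((1 : Fin 2), (none : Option F)) = 2 * (m:ℤ) := by
          rw [Rsum_1_none, hcard0, hcard1]
          push_cast
          ring
        left
        rw [hR, if_pos (by linarith), one_mul]
    | some a =>
      rcases hs with rfl | rfl
      · have h1 := hint1' a
        simp only [Set.mem_insert_iff, Set.mem_singleton_iff] at h1
        have hR : Rsum d0 d1 ((0 : Fin 2), some a)
            = 2 + 2 * ((m:ℤ)^2 + ((m:ℤ)^2 + m + 1))
              - 4 * (((d0 ∩ ((SQ F ∪ {0}).image (· + a))).card : ℤ)
                + ((d1 ∩ ((SQ F).image (· + a))).card : ℤ)) := by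
          rw [Rsum_0_some hchar, hcard0, hcard1]
          push_cast
          ring
        rcases h1 with h | h | h | h
        · right
          have hv : Rsum d0 d1 ((0 : Fin 2), some a) = 2 * (m:ℤ) + 4 := by
            rw [hR]
            have : (((d0 ∩ ((SQ F ∪ {0}).image (· + a))).card : ℤ)
                + ((d1 ∩ ((SQ F).image (· + a))).card : ℤ)) = (m:ℤ)^2 := by
              exact_mod_cast congrArg (Nat.cast : ℕ → ℤ) h
            rw [this]; ring
          rw [hv, if_pos (by linarith), one_mul]
        · left
          have hv : Rsum d0 d1 ((0 : Fin 2), some a) = 2 * (m:ℤ) := by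
            rw [hR]
            have : (((d0 ∩ ((SQ F ∪ {0}).image (· + a))).card : ℤ)
                + ((d1 ∩ ((SQ F).image (· + a))).card : ℤ)) = (m:ℤ)^2 + 1 := by
              exact_mod_cast congrArg (Nat.cast : ℕ → ℤ) h
            rw [this]; ring
          rw [hv, if_pos (by linarith), one_mul]
        · left
          have hv : Rsum d0 d1 ((0 : Fin 2), some a) = -(2 * (m:ℤ)) := by
            rw [hR]
            have : (((d0 ∩ ((SQ F ∪ {0}).image (· + a))).card : ℤ)
                + ((d1 ∩ ((SQ F).image (· + a))).card : ℤ)) = (m:ℤ)^2 + m + 1 := by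
              exact_mod_cast congrArg (Nat.cast : ℕ → ℤ) h
            rw [this]; ring
          rw [hv, if_neg (by linarith)]
          ring
        · right
          have hv : Rsum d0 d1 ((0 : Fin 2), some a) = -(2 * (m:ℤ) + 4) := by
            rw [hR]
            have : (((d0 ∩ ((SQ F ∪ {0}).image (· + a))).card : ℤ)
                + ((d1 ∩ ((SQ F).image (· + a))).card : ℤ)) = (m:ℤ)^2 + m + 2 := by
              exact_mod_cast congrArg (Nat.cast : ℕ → ℤ) h
            rw [this]; ring
          rw [hv, if_neg (by linarith)]
          ring
      · have h1 := hint2' a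
        simp only [Set.mem_insert_iff, Set.mem_singleton_iff] at h1
        have hR : Rsum d0 d1 ((1 : Fin 2), some a)
            = 2 * (m:ℤ)^2 + 2 * ((m:ℤ)^2 + m + 1) - 2
              - 4 * (((d0 ∩ ((SQ F).image (· + a))).card : ℤ)
                + ((d1 ∩ ((NStr F).image (· + a))).card : ℤ)) := by
          rw [Rsum_1_some hchar, hcard0, hcard1]
          push_cast
          ring
        rcases h1 with h | h | h | h
        · right
          have hv : Rsum d0 d1 ((1 : Fin 2), some a) = 2 * (m:ℤ) + 4 := by
            rw [hR]
            have hnat : ((d0 ∩ ((SQ F).image (· + a))).card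
                + (d1 ∩ ((NStr F).image (· + a))).card) + 1 = m ^ 2 := by omega
            have : (((d0 ∩ ((SQ F).image (· + a))).card : ℤ)
                + ((d1 ∩ ((NStr F).image (· + a))).card : ℤ)) = (m:ℤ)^2 - 1 := by
              have := congrArg (Nat.cast : ℕ → ℤ) hnat
              push_cast at this
              linarith
            rw [this]; ring
          rw [hv, if_pos (by linarith), one_mul]
        · left
          have hv : Rsum d0 d1 ((1 : Fin 2), some a) = 2 * (m:ℤ) := by
            rw [hR]
            have : (((d0 ∩ ((SQ F).image (· + a))).card : ℤ)
                + ((d1 ∩ ((NStr F).image (· + a))).card : ℤ)) = (m:ℤ)^2 := by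
              exact_mod_cast congrArg (Nat.cast : ℕ → ℤ) h
            rw [this]; ring
          rw [hv, if_pos (by linarith), one_mul]
        · left
          have hv : Rsum d0 d1 ((1 : Fin 2), some a) = -(2 * (m:ℤ)) := by
            rw [hR]
            have : (((d0 ∩ ((SQ F).image (· + a))).card : ℤ)
                + ((d1 ∩ ((NStr F).image (· + a))).card : ℤ)) = (m:ℤ)^2 + m := by
              exact_mod_cast congrArg (Nat.cast : ℕ → ℤ) h
            rw [this]; ring
          rw [hv, if_neg (by linarith)]
          ring
        · right
          have hv : Rsum d0 d1 ((1 : Fin 2), some a) = -(2 * (m:ℤ) + 4) := by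
            rw [hR]
            have : (((d0 ∩ ((SQ F).image (· + a))).card : ℤ)
                + ((d1 ∩ ((NStr F).image (· + a))).card : ℤ)) = (m:ℤ)^2 + m + 1 := by
              exact_mod_cast congrArg (Nat.cast : ℕ → ℤ) h
            rw [this]; ring
          rw [hv, if_neg (by linarith)]
          ring
end

section
/- Let m be an odd positive integer such that q = 2m² − 1 is a prime power, let C := C_0^{(2,q)} be the set of nonzero squares of F_q, and let N := F_q∖(C∪{0}) be the set of nonsquares of F_q. Suppose b ∈ {0, 1} and D₀, D₁ ⊆ F_q satisfy b + |D₀| + |D₁| = 2m² − m, |D₁| ∈ {m²−m, m²}, and for every j ∈ F_q: |D₀ ∩ ((C∪{0}) + j)| + |D₁ ∩ (C + j)| ∈ {m²−m, m²} and b + |D₀ ∩ (C + j)| + |D₁ ∩ (N + j)| ∈ {m²−m, m²}. Then there exists an Hadamard matrix of order 4m² all of whose row sums equal 2m (a regular Hadamard matrix). -/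
open Finset

section Aux
variable {F : Type} [Field F] [Fintype F] [DecidableEq F]

lemma corr_sum (hchar : ringChar F ≠ 2) (t : F) (ht : t ≠ 0) :
    ∑ x : F, quadraticChar F x * quadraticChar F (x + t) = -1 := by
  have key : ∑ x : F, quadraticChar F x * quadraticChar F (x + t)
      = ∑ x ∈ (univ : Finset F) \ {0}, quadraticChar F (1 + t * x⁻¹) := by
    rw [← Finset.sum_subset (Finset.subset_univ ((univ : Finset F) \ {0}))]
    · refine Finset.sum_congr rfl fun x hx => ?_
      have hx0 : x ≠ 0 := by simpa using (Finset.mem_sdiff.mp hx).2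
      have : x + t = x * (1 + t * x⁻¹) := by field_simp
      have hsq : quadraticChar F x * quadraticChar F x = 1 := by
        have := quadraticChar_sq_one hx0
        rwa [pow_two] at this
      rw [this, map_mul, ← mul_assoc, hsq, one_mul]
    · intro x _ hx
      have : x = 0 := by by_contra h; exact hx (by simp [h])
      simp [this]
  rw [key]
  have hbij : ∑ x ∈ (univ : Finset F) \ {0}, quadraticChar F (1 + t * x⁻¹)
      = ∑ y ∈ (univ : Finset F) \ {1}, quadraticChar F y := by
    refine Finset.sum_nbij' (fun x => 1 + t * x⁻¹) (fun y => t * (y - 1)⁻¹) ?_ ?_ ?_ ?_ ?_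
    · intro x hx
      have hx0 : x ≠ 0 := by simpa using (Finset.mem_sdiff.mp hx).2
      have : t * x⁻¹ ≠ 0 := mul_ne_zero ht (inv_ne_zero hx0)
      simp only [Finset.mem_sdiff, Finset.mem_univ, true_and, Finset.mem_singleton]
      intro h
      exact this (by linear_combination h)
    · intro y hy
      have hy1 : y ≠ 1 := by simpa using (Finset.mem_sdiff.mp hy).2
      have : (y - 1) ≠ 0 := sub_ne_zero.mpr hy1
      simp only [Finset.mem_sdiff, Finset.mem_univ, true_and, Finset.mem_singleton]
      exact mul_ne_zero ht (inv_ne_zero this)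
    · intro x hx
      have hx0 : x ≠ 0 := by simpa using (Finset.mem_sdiff.mp hx).2
      field_simp
      simp [ht]
    · intro y hy
      have hy1 : y ≠ 1 := by simpa using (Finset.mem_sdiff.mp hy).2
      have h0 : (y - 1) ≠ 0 := sub_ne_zero.mpr hy1
      field_simp
      ring
    · intro x hx; rfl
  rw [hbij, Finset.sum_sdiff_eq_sub (Finset.subset_univ _), quadraticChar_sum_zero hchar]
  simp

end Aux


section Aux2
variable {F : Type} [Field F] [Fintype F] [DecidableEq F]

noncomputable def Am : Option F → Option F → ℤ
  | none, none => 0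
  | none, some _ => 1
  | some _, none => 1
  | some j, some x => quadraticChar F (x - j)

def Bm : Fin 2 → Fin 2 → ℤ := fun u v => if u = 1 ∧ v = 1 then -1 else 1
def Cm : Fin 2 → Fin 2 → ℤ := fun u v => if u = 0 ∧ v = 0 then 1 else -1
def gm : Fin 2 → Fin 2 → ℤ := fun u v => if u = 0 ∧ v = 1 then -2 else if u = 1 ∧ v = 0 then 2 else 0

noncomputable def H2 (p c : Option F × Fin 2) : ℤ :=
  Am p.1 c.1 * Bm p.2 c.2 + (if p.1 = c.1 then Cm p.2 c.2 else 0)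

lemma Am_symm (hneg : quadraticChar F (-1) = 1) (a x : Option F) : Am a x = Am x a := by
  match a, x with
  | none, none => rfl
  | none, some _ => rfl
  | some _, none => rfl
  | some j, some x =>
    show quadraticChar F (x - j) = quadraticChar F (j - x)
    have : j - x = -1 * (x - j) := by ring
    rw [this, map_mul, hneg, one_mul]

lemma sumBB (u u' : Fin 2) : ∑ v : Fin 2, Bm u v * Bm u' v = if u = u' then 2 else 0 := by
  fin_cases u <;> fin_cases u' <;> simp [Fin.sum_univ_two, Bm]

lemma sumCC (u u' : Fin 2) : ∑ v : Fin 2, Cm u v * Cm u' v = if u = u' then 2 else 0 := by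
  fin_cases u <;> fin_cases u' <;> simp [Fin.sum_univ_two, Cm]

lemma sumBC (u u' : Fin 2) : ∑ v : Fin 2, Bm u v * Cm u' v = gm u u' := by
  fin_cases u <;> fin_cases u' <;> simp [Fin.sum_univ_two, Bm, Cm, gm]

lemma sumCB (u u' : Fin 2) : ∑ v : Fin 2, Cm u v * Bm u' v = - gm u u' := by
  fin_cases u <;> fin_cases u' <;> simp [Fin.sum_univ_two, Bm, Cm, gm]

@[simp] lemma Am_ss (j x : F) : Am (some j) (some x) = quadraticChar F (x - j) := rfl
@[simp] lemma Am_ns (x : F) : Am (none : Option F) (some x) = 1 := rfl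
@[simp] lemma Am_sn (j : F) : Am (some j) (none : Option F) = 1 := rfl
@[simp] lemma Am_nn : Am (none : Option F) (none : Option F) = 0 := rfl

lemma sumAA (hchar : ringChar F ≠ 2) (a a' : Option F) :
    ∑ x : Option F, Am a x * Am a' x = if a = a' then (Fintype.card F : ℤ) else 0 := by
  match a, a' with
  | none, none =>
    simp [Fintype.sum_option]
  | none, some j' =>
    rw [Fintype.sum_option]
    simp only [Am_nn, Am_ns, Am_sn, Am_ss, zero_mul, one_mul]
    have h1 : ∑ x : F, quadraticChar F (x - j') = ∑ y : F, quadraticChar F y :=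
      Fintype.sum_equiv (Equiv.subRight j') _ _ (fun x => rfl)
    rw [h1, quadraticChar_sum_zero hchar]
    simp
  | some j, none =>
    rw [Fintype.sum_option]
    simp only [Am_nn, Am_ns, Am_sn, Am_ss, mul_zero, mul_one]
    have h1 : ∑ x : F, quadraticChar F (x - j) = ∑ y : F, quadraticChar F y :=
      Fintype.sum_equiv (Equiv.subRight j) _ _ (fun x => rfl)
    rw [h1, quadraticChar_sum_zero hchar]
    simp
  | some j, some j' =>
    rw [Fintype.sum_option]
    simp only [Am_nn, Am_ns, Am_sn, Am_ss, mul_one, one_mul]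
    by_cases h : j = j'
    · subst h
      have h2 : ∀ x : F, quadraticChar F (x - j) * quadraticChar F (x - j)
          = if x = j then 0 else 1 := by
        intro x
        by_cases hx : x = j
        · simp [hx]
        · have hz : x - j ≠ 0 := sub_ne_zero.mpr hx
          have hq := quadraticChar_sq_one hz
          rw [pow_two] at hq
          rw [if_neg hx, hq]
      rw [Finset.sum_congr rfl fun x _ => h2 x]
      have h3 : (∑ x : F, if x = j then (0:ℤ) else 1)
          = ∑ x : F, ((1:ℤ) - if x = j then 1 else 0) :=
        Finset.sum_congr rfl (by intro x _; split <;> ring)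
      rw [h3, Finset.sum_sub_distrib, Finset.sum_const,
        Finset.sum_ite_eq' univ j (fun _ => (1:ℤ))]
      simp [Finset.card_univ]
    · have hre : ∑ x : F, quadraticChar F (x - j) * quadraticChar F (x - j')
          = ∑ y : F, quadraticChar F y * quadraticChar F (y + (j' - j)) := by
        refine Fintype.sum_equiv (Equiv.subRight j') _ _ (fun x => ?_)
        simp only [Equiv.subRight_apply]
        have hx : x - j' + (j' - j) = x - j := by ring
        rw [hx, mul_comm]
      rw [hre, corr_sum hchar _ (sub_ne_zero.mpr (fun hh => h hh.symm))]
      simp [h]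


lemma sum_delta (a a' : Option F) :
    ∑ x : Option F, (if a = x ∧ a' = x then (1:ℤ) else 0) = if a = a' then 1 else 0 := by
  by_cases h : a = a'
  · subst h
    simp [and_self, Finset.sum_ite_eq]
  · rw [if_neg h]
    refine Finset.sum_eq_zero fun x _ => ?_
    rw [if_neg]
    rintro ⟨h1, h2⟩
    exact h (h1.trans h2.symm)

lemma H2_orth (hchar : ringChar F ≠ 2) (hneg : quadraticChar F (-1) = 1)
    (p p' : Option F × Fin 2) :
    ∑ c : Option F × Fin 2, H2 p c * H2 p' c
      = if p = p' then 2 * ((Fintype.card F : ℤ) + 1) else 0 := by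
  obtain ⟨a, u⟩ := p
  obtain ⟨a', u'⟩ := p'
  have inner : ∀ x : Option F, ∑ v : Fin 2, H2 (a,u) (x,v) * H2 (a',u') (x,v)
      = (if u = u' then 2 else 0) * (Am a x * Am a' x + (if a = x ∧ a' = x then 1 else 0))
        + ((if a' = x then Am a x else 0) - (if a = x then Am a' x else 0)) * gm u u' := by
    intro x
    fin_cases u <;> fin_cases u' <;> by_cases h1 : a = x <;> by_cases h2 : a' = x <;>
      simp [H2, h1, h2, Fin.sum_univ_two, Bm, Cm, gm] <;> ring
  rw [Fintype.sum_prod_type, Finset.sum_congr rfl fun x _ => inner x,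
    Finset.sum_add_distrib, ← Finset.mul_sum, Finset.sum_add_distrib,
    sumAA hchar, sum_delta, ← Finset.sum_mul, Finset.sum_sub_distrib,
    Finset.sum_ite_eq univ a' (fun x => Am a x),
    Finset.sum_ite_eq univ a (fun x => Am a' x)]
  simp only [Finset.mem_univ, if_true]
  rw [Am_symm hneg a a', sub_self, zero_mul, add_zero]
  by_cases hu : u = u' <;> by_cases ha : a = a' <;>
    simp [hu, ha, Prod.ext_iff] <;> ring


lemma ncard_int (A : Set F) [DecidablePred (· ∈ A)] :
    ((A.ncard : ℤ)) = ∑ x : F, (if x ∈ A then 1 else 0) := by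
  rw [Set.ncard_eq_toFinset_card' A, ← Set.filter_mem_univ_eq_toFinset A,
    Finset.card_filter]
  push_cast
  rfl

lemma H2_pm (p c : Option F × Fin 2) : H2 p c = 1 ∨ H2 p c = -1 := by
  obtain ⟨a, u⟩ := p
  obtain ⟨x, v⟩ := c
  have hBm : Bm u v = 1 ∨ Bm u v = -1 := by
    unfold Bm; split <;> simp
  have hCm : Cm u v = 1 ∨ Cm u v = -1 := by
    unfold Cm; split <;> simp
  match a, x with
  | none, none => simpa [H2] using hCm
  | none, some y => simpa [H2] using hBm
  | some j, none => simpa [H2] using hBm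
  | some j, some y =>
    by_cases h : j = y
    · subst h
      simpa [H2] using hCm
    · have hq := quadraticChar_dichotomy (sub_ne_zero.mpr fun hh => h hh.symm : y - j ≠ 0)
      have : H2 (some j, u) (some y, v) = quadraticChar F (y - j) * Bm u v := by
        simp [H2, h]
      rw [this]
      rcases hq with hq | hq <;> rcases hBm with hB | hB <;> rw [hq, hB] <;> simp

lemma two_ncard (D W : Set F) [DecidablePred (· ∈ D)] [DecidablePred (· ∈ W)]
    (j : F) (s t : ℤ)
    (hW : ∀ y : F, (if y ∈ W then (2:ℤ) else 0)
      = 1 + s * quadraticChar F y + t * (if y = 0 then 1 else 0)) :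
    2 * (((D ∩ ((fun x => x + j) '' W)).ncard : ℤ))
      = (D.ncard : ℤ) + s * (∑ x : F, if x ∈ D then quadraticChar F (x - j) else 0)
        + t * (if j ∈ D then 1 else 0) := by
  have him : ∀ x : F, (x ∈ ((fun x => x + j) '' W)) ↔ x - j ∈ W := by
    intro x
    constructor
    · rintro ⟨y, hy, rfl⟩; simpa using hy
    · intro h; exact ⟨x - j, h, by ring⟩
  haveI : DecidablePred (· ∈ (D ∩ ((fun x => x + j) '' W) : Set F)) := fun x =>
    decidable_of_iff (x ∈ D ∧ x - j ∈ W)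
      (by simp only [Set.mem_inter_iff, him])
  rw [ncard_int, ncard_int, Finset.mul_sum]
  have key : ∀ x : F, (2:ℤ) * (if x ∈ D ∩ ((fun x => x + j) '' W) then 1 else 0)
      = (if x ∈ D then (1:ℤ) else 0)
        + s * (if x ∈ D then quadraticChar F (x - j) else 0)
        + t * (if x = j then (if x ∈ D then (1:ℤ) else 0) else 0) := by
    intro x
    have h := hW (x - j)
    by_cases hxj : x = j
    · subst hxj
      by_cases hD : x ∈ D <;> by_cases hT : x - x ∈ W <;>
          (try simp [Set.mem_inter_iff, him, sub_self, hD, hT, quadraticChar_zero, ← sub_eq_add_neg] at h ⊢) <;>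
        try linarith
    · have hne : x - j ≠ 0 := sub_ne_zero.mpr hxj
      by_cases hD : x ∈ D <;> by_cases hT : x - j ∈ W <;>
          (try simp [Set.mem_inter_iff, him, hD, hT, hxj, hne, ← sub_eq_add_neg] at h ⊢) <;>
        try linarith
  rw [Finset.sum_congr rfl fun x _ => key x, Finset.sum_add_distrib, Finset.sum_add_distrib,
    ← Finset.mul_sum, ← Finset.mul_sum,
    Finset.sum_ite_eq' univ j (fun x => if x ∈ D then (1:ℤ) else 0)]
  simp

end Aux2
set_option maxHeartbeats 2000000 in
/-- For `q = 2m² − 1` a prime power with `m` odd, a two-intersection-type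
configuration `(b, D₀, D₁)` as in the paper yields a regular Hadamard matrix of order
`4m²` (all row sums equal to `2m`). -/
theorem stmt_17 (m : ℕ) (hm : 0 < m) (hmodd : Odd m)
    (F : Type) [Field F] [Fintype F] (hF : Fintype.card F = 2 * m ^ 2 - 1)
    (C : Set F) (hC : C = {x : F | x ≠ 0 ∧ IsSquare x})
    (N : Set F) (hN : N = Set.univ \ (C ∪ {0}))
    (b : ℕ) (hb : b = 0 ∨ b = 1)
    (D₀ D₁ : Set F)
    (hsize : b + D₀.ncard + D₁.ncard = 2 * m ^ 2 - m)
    (hD₁ : D₁.ncard ∈ ({m ^ 2 - m, m ^ 2} : Set ℕ))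
    (hint1 : ∀ j : F,
      (D₀ ∩ ((fun x => x + j) '' (C ∪ {0}))).ncard + (D₁ ∩ ((fun x => x + j) '' C)).ncard ∈
        ({m ^ 2 - m, m ^ 2} : Set ℕ))
    (hint2 : ∀ j : F,
      b + (D₀ ∩ ((fun x => x + j) '' C)).ncard + (D₁ ∩ ((fun x => x + j) '' N)).ncard ∈
        ({m ^ 2 - m, m ^ 2} : Set ℕ)) :
    ∃ H : Matrix (Fin (4 * m ^ 2)) (Fin (4 * m ^ 2)) ℤ,
      (∀ i j, H i j = 1 ∨ H i j = -1) ∧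
      H * H.transpose = ((4 * m ^ 2 : ℕ) : ℤ) • (1 : Matrix _ _ ℤ) ∧
      (∀ i, (∑ j, H i j) = 2 * (m : ℤ)) := by
  classical
  obtain ⟨k, hk⟩ := hmodd
  have hm2 : m ^ 2 = 4 * k ^ 2 + 4 * k + 1 := by subst hk; ring
  -- numeric facts
  have hmm : 1 ≤ m ^ 2 := by nlinarith
  have hmle : m ≤ m ^ 2 := by nlinarith
  have hmle2 : m ≤ 2 * m ^ 2 := by nlinarith
  have h12 : 1 ≤ 2 * m ^ 2 := by nlinarith
  have hchar : ringChar F ≠ 2 := by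
    intro h
    have := FiniteField.even_card_iff_char_two.mp h
    rw [hF] at this
    omega
  have hneg : quadraticChar F (-1) = 1 := by
    rw [quadraticChar_neg_one hchar]
    apply ZMod.χ₄_nat_one_mod_four
    rw [hF, hm2]
    omega
  have hqZ : ((Fintype.card F : ℤ)) = 2 * (m:ℤ) ^ 2 - 1 := by
    rw [hF, Nat.cast_sub h12]; push_cast; ring
  have hsizeZ : (b:ℤ) + (D₀.ncard : ℤ) + (D₁.ncard : ℤ) = 2 * (m:ℤ) ^ 2 - m := by
    have := congrArg (fun n : ℕ => (n : ℤ)) hsize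
    simpa [Nat.cast_sub hmle2] using this
  have hD₁Z : (D₁.ncard : ℤ) = (m:ℤ)^2 - m ∨ (D₁.ncard : ℤ) = (m:ℤ)^2 := by
    rcases hD₁ with h | h
    · left; rw [h, Nat.cast_sub hmle]; push_cast; ring
    · right; rw [Set.mem_singleton_iff.mp h]; push_cast; ring
  -- character sum helpers
  have hchi0 : ∀ j : F, ∑ x : F, quadraticChar F (x - j) = 0 := by
    intro j
    have h1 : ∑ x : F, quadraticChar F (x - j) = ∑ y : F, quadraticChar F y :=
      Fintype.sum_equiv (Equiv.subRight j) _ _ (fun x => rfl)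
    rw [h1, quadraticChar_sum_zero hchar]
  -- membership translations
  have hmemC : ∀ y : F, y ∈ C ↔ (y ≠ 0 ∧ IsSquare y) := by
    intro y; rw [hC]; rfl
  have hmemN : ∀ y : F, y ∈ N ↔ (y ≠ 0 ∧ ¬ IsSquare y) := by
    intro y
    rw [hN]
    simp only [Set.mem_diff, Set.mem_univ, true_and, Set.mem_union, Set.mem_singleton_iff,
      hmemC]
    constructor
    · intro h
      refine ⟨fun h0 => h (Or.inr h0), fun hs => h (Or.inl ⟨fun h0 => h (Or.inr h0), hs⟩)⟩
    · rintro ⟨h0, hs⟩ (⟨_, hsq⟩ | hz)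
      · exact hs hsq
      · exact h0 hz
  have hchival : ∀ y : F, y ≠ 0 → ((quadraticChar F y = 1 ∧ IsSquare y) ∨
      (quadraticChar F y = -1 ∧ ¬ IsSquare y)) := by
    intro y hy
    by_cases hs : IsSquare y
    · exact Or.inl ⟨(quadraticChar_one_iff_isSquare hy).mpr hs, hs⟩
    · rcases quadraticChar_dichotomy hy with h | h
      · exact absurd ((quadraticChar_one_iff_isSquare hy).mp h) hs
      · exact Or.inr ⟨h, hs⟩
  -- the three pointwise window identities
  have hWCu0 : ∀ y : F, (if y ∈ C ∪ {0} then (2:ℤ) else 0)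
      = 1 + 1 * quadraticChar F y + 1 * (if y = 0 then 1 else 0) := by
    intro y
    by_cases hy : y = 0
    · subst hy
      simp [quadraticChar_zero]
    · rcases hchival y hy with ⟨h1, h2⟩ | ⟨h1, h2⟩
      · have hyC : y ∈ C := (hmemC y).mpr ⟨hy, h2⟩
        simp [Set.mem_union, hyC, h1, hy]
      · have hyC : y ∉ C := fun hc => h2 ((hmemC y).mp hc).2
        simp [Set.mem_union, hyC, h1, hy]
  have hWC : ∀ y : F, (if y ∈ C then (2:ℤ) else 0)
      = 1 + 1 * quadraticChar F y + (-1) * (if y = 0 then 1 else 0) := by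
    intro y
    by_cases hy : y = 0
    · subst hy
      have : (0:F) ∉ C := fun hc => ((hmemC 0).mp hc).1 rfl
      simp [this, quadraticChar_zero]
    · rcases hchival y hy with ⟨h1, h2⟩ | ⟨h1, h2⟩
      · have : y ∈ C := (hmemC y).mpr ⟨hy, h2⟩
        simp [this, h1, hy]
      · have : y ∉ C := fun hc => h2 ((hmemC y).mp hc).2
        simp [this, h1, hy]
  have hWN : ∀ y : F, (if y ∈ N then (2:ℤ) else 0)
      = 1 + (-1) * quadraticChar F y + (-1) * (if y = 0 then 1 else 0) := by
    intro y
    by_cases hy : y = 0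
    · subst hy
      have : (0:F) ∉ N := fun hc => ((hmemN 0).mp hc).1 rfl
      simp [this, quadraticChar_zero]
    · rcases hchival y hy with ⟨h1, h2⟩ | ⟨h1, h2⟩
      · have : y ∉ N := fun hc => ((hmemN y).mp hc).2 h2
        simp [this, h1, hy]
      · have : y ∈ N := (hmemN y).mpr ⟨hy, h2⟩
        simp [this, h1, hy]
  -- abbreviations
  set S0 : F → ℤ := fun j => ∑ x : F, (if x ∈ D₀ then quadraticChar F (x - j) else 0) with hS0
  set S1 : F → ℤ := fun j => ∑ x : F, (if x ∈ D₁ then quadraticChar F (x - j) else 0) with hS1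
  set i0 : F → ℤ := fun j => if j ∈ D₀ then 1 else 0 with hi0
  set i1 : F → ℤ := fun j => if j ∈ D₁ then 1 else 0 with hi1
  -- the two key linear conditions
  have hE1 : ∀ j : F, S0 j + S1 j + i0 j - i1 j = (b:ℤ) - m
      ∨ S0 j + S1 j + i0 j - i1 j = (b:ℤ) + m := by
    intro j
    have h1 := two_ncard D₀ (C ∪ {0}) j 1 1 hWCu0
    have h2 := two_ncard D₁ C j 1 (-1) hWC
    have hcast : ∀ n : ℕ, n = m ^ 2 - m ∨ n = m ^ 2 →
        (n : ℤ) = (m:ℤ)^2 - m ∨ (n : ℤ) = (m:ℤ)^2 := by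
      rintro n (h | h)
      · left; rw [h, Nat.cast_sub hmle]; push_cast; ring
      · right; rw [h]; push_cast; ring
    rcases hcast _ (hint1 j) with h | h <;>
      [left; right] <;>
    · push_cast at h
      simp only [hS0, hS1, hi0, hi1]
      linarith [h1, h2, hsizeZ]
  have hE2 : ∀ j : F, S0 j - S1 j - i0 j - i1 j = -(b:ℤ) - m
      ∨ S0 j - S1 j - i0 j - i1 j = -(b:ℤ) + m := by
    intro j
    have h1 := two_ncard D₀ C j 1 (-1) hWC
    have h2 := two_ncard D₁ N j (-1) (-1) hWN
    have hcast : ∀ n : ℕ, n = m ^ 2 - m ∨ n = m ^ 2 →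
        (n : ℤ) = (m:ℤ)^2 - m ∨ (n : ℤ) = (m:ℤ)^2 := by
      rintro n (h | h)
      · left; rw [h, Nat.cast_sub hmle]; push_cast; ring
      · right; rw [h]; push_cast; ring
    rcases hcast _ (hint2 j) with h | h <;>
      [left; right] <;>
    · push_cast at h
      simp only [hS0, hS1, hi0, hi1]
      linarith [h1, h2, hsizeZ]
  -- the signed matrix
  set εv : Fin 2 → F → ℤ := fun v x =>
    if v = 0 then (if x ∈ D₀ then (-1:ℤ) else 1) else (if x ∈ D₁ then (-1:ℤ) else 1) with hεv
  set σ : Fin 2 → ℤ := fun v => if v = 0 then 1 else 2*(b:ℤ) - 1 with hσ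
  set ε : Option F × Fin 2 → ℤ := fun c => Option.elim c.1 (σ c.2) (fun x => εv c.2 x) with hε
  set K : Option F × Fin 2 → Option F × Fin 2 → ℤ := fun p c => H2 p c * ε c with hK
  have hεsq : ∀ c, ε c * ε c = 1 := by
    rintro ⟨x, v⟩
    match x with
    | none =>
      show σ v * σ v = 1
      simp only [hσ]
      rcases hb with h | h <;> subst h <;> split <;> norm_num
    | some y =>
      show εv v y * εv v y = 1
      simp only [hεv]
      split <;> split <;> norm_num
  have hεpm : ∀ c, ε c = 1 ∨ ε c = -1 := by
    intro c
    have := hεsq c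
    rcases mul_self_eq_one_iff.mp this with h | h
    · exact Or.inl h
    · exact Or.inr h
  -- generic sum helpers
  have hgen : ∀ (D : Set F) (j : F), ∑ x : F, quadraticChar F (x - j) * (if x ∈ D then (-1:ℤ) else 1)
      = -2 * ∑ x : F, (if x ∈ D then quadraticChar F (x - j) else 0) := by
    intro D j
    have hpt : ∀ x : F, quadraticChar F (x - j) * (if x ∈ D then (-1:ℤ) else 1)
        = quadraticChar F (x - j) - 2 * (if x ∈ D then quadraticChar F (x - j) else 0) := by
      intro x; by_cases hx : x ∈ D <;> simp [hx] <;> ring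
    rw [Finset.sum_congr rfl fun x _ => hpt x, Finset.sum_sub_distrib, hchi0 j, ← Finset.mul_sum]
    ring
  have hcount : ∀ (D : Set F), ∑ x : F, (if x ∈ D then (-1:ℤ) else 1)
      = (Fintype.card F : ℤ) - 2 * D.ncard := by
    intro D
    have hpt : ∀ x : F, (if x ∈ D then (-1:ℤ) else 1)
        = 1 - 2 * (if x ∈ D then (1:ℤ) else 0) := by
      intro x; split <;> ring
    rw [Finset.sum_congr rfl fun x _ => hpt x, Finset.sum_sub_distrib, Finset.sum_const,
      ← Finset.mul_sum, ← ncard_int]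
    simp [Finset.card_univ]
  -- expansion of row sums
  have hexp : ∀ (a : Option F) (u : Fin 2), ∑ c : Option F × Fin 2, K (a,u) c
      = (∑ v : Fin 2, H2 (a,u) (none, v) * σ v)
        + ∑ v : Fin 2, (∑ x : F, H2 (a,u) (some x, v) * εv v x) := by
    intro a u
    rw [Fintype.sum_prod_type, Fintype.sum_option]
    congr 1
    exact Finset.sum_comm
  -- row sums
  have hrow : ∀ p : Option F × Fin 2,
      (∑ c, K p c) = 2*(m:ℤ) ∨ (∑ c, K p c) = -(2*(m:ℤ)) := by
    rintro ⟨a, u⟩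
    match a with
    | none =>
      have h2n : ∀ v : Fin 2, H2 ((none : Option F), u) (none, v) = Cm u v := by
        intro v; simp [H2]
      have h2s : ∀ (x : F) (v : Fin 2), H2 ((none : Option F), u) (some x, v) = Bm u v := by
        intro x v; simp [H2]
      rw [hexp none u]
      simp only [h2n, h2s]
      rw [Fin.sum_univ_two, Fin.sum_univ_two, ← Finset.mul_sum, ← Finset.mul_sum]
      have e0 : ∑ x : F, εv 0 x = (Fintype.card F : ℤ) - 2 * D₀.ncard := by
        simp only [hεv]; simpa using hcount D₀
      have e1 : ∑ x : F, εv 1 x = (Fintype.card F : ℤ) - 2 * D₁.ncard := by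
        simp only [hεv]; simpa using hcount D₁
      rw [e0, e1]
      fin_cases u
      · left
        simp only [Cm, Bm, hσ]
        norm_num
        linarith [hqZ, hsizeZ]
      · rcases hD₁Z with h | h
        · right
          simp only [Cm, Bm, hσ]
          norm_num
          linarith [hqZ, hsizeZ, h]
        · left
          simp only [Cm, Bm, hσ]
          norm_num
          linarith [hqZ, hsizeZ, h]
    | some j =>
      have h2n : ∀ v : Fin 2, H2 (some j, u) (none, v) = Bm u v := by
        intro v; simp [H2]
      have h2s : ∀ (x : F) (v : Fin 2), H2 (some j, u) (some x, v) * εv v x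
          = Bm u v * (quadraticChar F (x - j) * εv v x)
            + (if j = x then Cm u v * εv v x else 0) := by
        intro x v
        by_cases h : j = x <;> simp [H2, h] <;> ring
      rw [hexp (some j) u]
      simp only [h2n, h2s]
      have hsum : ∀ v : Fin 2, ∑ x : F, (Bm u v * (quadraticChar F (x - j) * εv v x)
          + (if j = x then Cm u v * εv v x else 0))
          = Bm u v * (∑ x : F, quadraticChar F (x - j) * εv v x) + Cm u v * εv v j := by
        intro v
        rw [Finset.sum_add_distrib, ← Finset.mul_sum,
          Finset.sum_ite_eq univ j (fun x => Cm u v * εv v x)]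
        simp
      rw [Finset.sum_congr rfl fun v _ => hsum v]
      have g0 : ∑ x : F, quadraticChar F (x - j) * εv 0 x = -2 * S0 j := by
        simp only [hεv, hS0]; simpa using hgen D₀ j
      have g1 : ∑ x : F, quadraticChar F (x - j) * εv 1 x = -2 * S1 j := by
        simp only [hεv, hS1]; simpa using hgen D₁ j
      have v0 : εv 0 j = 1 - 2 * i0 j := by
        simp only [hεv, hi0]; by_cases h : j ∈ D₀ <;> simp [h]
      have v1 : εv 1 j = 1 - 2 * i1 j := by
        simp only [hεv, hi1]; by_cases h : j ∈ D₁ <;> simp [h]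
      rw [Fin.sum_univ_two, Fin.sum_univ_two, g0, g1, v0, v1]
      fin_cases u
      · rcases hE1 j with h | h
        · left
          simp only [Cm, Bm, hσ]
          norm_num
          linarith [h]
        · right
          simp only [Cm, Bm, hσ]
          norm_num
          linarith [h]
      · rcases hE2 j with h | h
        · left
          simp only [Cm, Bm, hσ]
          norm_num
          linarith [h]
        · right
          simp only [Cm, Bm, hσ]
          norm_num
          linarith [h]
  -- orthogonality of K
  have hKK : ∀ p p' : Option F × Fin 2, ∑ c, K p c * K p' c
      = if p = p' then ((4 * m ^ 2 : ℕ) : ℤ) else 0 := by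
    intro p p'
    have hpt : ∀ c, K p c * K p' c = H2 p c * H2 p' c := by
      intro c
      have : K p c * K p' c = H2 p c * H2 p' c * (ε c * ε c) := by rw [hK]; ring
      rw [this, hεsq c, mul_one]
    rw [Finset.sum_congr rfl fun c _ => hpt c, H2_orth hchar hneg]
    have : 2 * ((Fintype.card F : ℤ) + 1) = ((4 * m ^ 2 : ℕ) : ℤ) := by
      rw [hqZ]; push_cast; ring
    rw [this]
  -- sign normalization
  set sgn : Option F × Fin 2 → ℤ := fun p => if (∑ c, K p c) = 2*(m:ℤ) then 1 else -1 with hsgn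
  have hsgnpm : ∀ p, sgn p = 1 ∨ sgn p = -1 := by
    intro p
    by_cases h : (∑ c, K p c) = 2*(m:ℤ) <;> simp [hsgn, h]
  set Hf : Option F × Fin 2 → Option F × Fin 2 → ℤ := fun p c => sgn p * K p c with hHf
  have hHfrow : ∀ p, ∑ c, Hf p c = 2*(m:ℤ) := by
    intro p
    rw [hHf]
    simp only
    rw [← Finset.mul_sum]
    rcases hrow p with h | h
    · have hs : sgn p = 1 := by simp [hsgn, h]
      rw [h, hs]
      ring
    · have hne : (∑ c, K p c) ≠ 2*(m:ℤ) := by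
        rw [h]
        intro hcon
        have : (m:ℤ) > 0 := by exact_mod_cast hm
        linarith
      have hs : sgn p = -1 := by simp [hsgn, hne]
      rw [h, hs]
      ring
  have hHfKK : ∀ p p', ∑ c, Hf p c * Hf p' c
      = if p = p' then ((4 * m ^ 2 : ℕ) : ℤ) else 0 := by
    intro p p'
    have : ∀ c, Hf p c * Hf p' c = sgn p * sgn p' * (K p c * K p' c) := by
      intro c; rw [hHf]; ring
    rw [Finset.sum_congr rfl fun c _ => this c, ← Finset.mul_sum, hKK]
    by_cases h : p = p'
    · subst h
      simp only [if_pos rfl]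
      rcases hsgnpm p with hs | hs <;> rw [hs] <;> ring
    · simp only [if_neg h]
      ring
  have hHfpm : ∀ p c, Hf p c = 1 ∨ Hf p c = -1 := by
    intro p c
    rw [hHf]
    simp only
    rcases hsgnpm p with hs | hs <;> rcases H2_pm p c with h2 | h2 <;>
      rcases hεpm c with he | he <;> rw [hK] <;> simp only [hs, h2, he] <;> norm_num
  -- transfer to Fin (4m²)
  have hcard : Fintype.card (Option F × Fin 2) = 4 * m ^ 2 := by
    simp [hF]
    omega
  set e := Fintype.equivFinOfCardEq hcard with he
  refine ⟨fun i k => Hf (e.symm i) (e.symm k), fun i k => hHfpm _ _, ?_, ?_⟩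
  · ext i i'
    change (∑ k, Hf (e.symm i) (e.symm k) * (Matrix.transpose (Matrix.of fun i k => Hf (e.symm i) (e.symm k))) k i') = _
    simp only [Matrix.transpose_apply, Matrix.of_apply]
    have hsum : ∑ k, Hf (e.symm i) (e.symm k) * Hf (e.symm i') (e.symm k)
        = ∑ c, Hf (e.symm i) c * Hf (e.symm i') c :=
      Equiv.sum_comp e.symm (fun c => Hf (e.symm i) c * Hf (e.symm i') c)
    rw [hsum, hHfKK]
    have hiff : (e.symm i = e.symm i') ↔ i = i' := by
      constructor
      · intro h; exact e.symm.injective h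
      · intro h; rw [h]
    rw [Matrix.smul_apply, Matrix.one_apply]
    by_cases h : i = i'
    · rw [if_pos (hiff.mpr h), if_pos h]
      simp
    · rw [if_neg (fun hc => h (hiff.mp hc)), if_neg h]
      simp
  · intro i
    have hsum : ∑ k, Hf (e.symm i) (e.symm k) = ∑ c, Hf (e.symm i) c :=
      Equiv.sum_comp e.symm (fun c => Hf (e.symm i) c)
    rw [hsum, hHfrow]
end

section
/- Let q be an odd prime power, ω a generator of F_{q²}^×, and t an integer such that ω^t ∉ F_q. Then for each i ∈ {0, 1}, the set { x ∈ ω^t·F_q^× : Tr_{F_{q²}/F_q}(x·ω^{(q+1)/2}) ∈ C_i^{(2,q)} } has exactly (q − 1)/2 elements. -/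
open Polynomial in
/-- A fixed point of `x ↦ x^q` in `F2` lies in the image of `F` (of cardinality `q`). -/
lemma my_fixed_mem_range {q : ℕ} (F F2 : Type) [Field F] [Fintype F] [Field F2] [Fintype F2]
    [Algebra F F2] (hF : Fintype.card F = q) (x : F2) (hx : x ^ q = x) :
    x ∈ Set.range (algebraMap F F2) := by
  classical
  have hq2 : 2 ≤ q := hF ▸ Fintype.one_lt_card
  have hinj : Function.Injective (algebraMap F F2) := RingHom.injective _
  set p : F2[X] := X ^ q - X with hp
  have hpne : p ≠ 0 := by
    intro h
    have := congrArg (fun r => Polynomial.coeff r q) h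
    simp only [hp, Polynomial.coeff_sub, Polynomial.coeff_X_pow, if_pos rfl,
      Polynomial.coeff_zero, Polynomial.coeff_X] at this
    rcases eq_or_ne (1 : ℕ) q with h1 | h1
    · omega
    · simp [h1] at this
  have hdeg : p.natDegree ≤ q := by
    refine le_trans (Polynomial.natDegree_sub_le _ _) ?_
    simp [Polynomial.natDegree_X_pow, Polynomial.natDegree_X]
    omega
  set A : Finset F2 := Finset.univ.image (algebraMap F F2) with hA
  set B : Finset F2 := Finset.univ.filter (fun z : F2 => z ^ q = z) with hB
  have hAB : A ⊆ B := by
    intro z hz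
    simp only [hA, Finset.mem_image] at hz
    obtain ⟨y, -, rfl⟩ := hz
    simp only [hB, Finset.mem_filter, Finset.mem_univ, true_and]
    rw [← map_pow]
    congr 1
    rw [← hF]
    exact FiniteField.pow_card y
  have hBroots : B ⊆ p.roots.toFinset := by
    intro z hz
    simp only [hB, Finset.mem_filter] at hz
    rw [Multiset.mem_toFinset, Polynomial.mem_roots hpne]
    simp [hp, Polynomial.IsRoot, sub_eq_zero, hz.2]
  have hBcard : B.card ≤ q := by
    calc B.card ≤ p.roots.toFinset.card := Finset.card_le_card hBroots
      _ ≤ Multiset.card p.roots := Multiset.toFinset_card_le _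
      _ ≤ p.natDegree := Polynomial.card_roots' p
      _ ≤ q := hdeg
  have hAcard : A.card = q := by
    rw [hA, Finset.card_image_of_injective _ hinj, Finset.card_univ, hF]
  have hEq : A = B := Finset.eq_of_subset_of_card_le hAB (by omega)
  have hxB : x ∈ B := by simp [hB, hx]
  rw [← hEq, hA] at hxB
  simp only [Finset.mem_image, Finset.mem_univ, true_and] at hxB
  obtain ⟨y, hy⟩ := hxB
  exact ⟨y, hy⟩

/-- In a finite field of odd cardinality, there are `(#K - 1)/2` nonzero squares and
`(#K - 1)/2` nonsquares. -/
lemma my_card_squares (K : Type) [Field K] [Fintype K] (hodd : Odd (Fintype.card K)) :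
    ({z : K | z ≠ 0 ∧ IsSquare z}).ncard = (Fintype.card K - 1) / 2 ∧
    ({z : K | z ≠ 0 ∧ ¬ IsSquare z}).ncard = (Fintype.card K - 1) / 2 := by
  classical
  have h2 : ringChar K ≠ 2 := by
    intro h
    have := FiniteField.even_card_of_char_two h
    obtain ⟨k, hk⟩ := hodd
    omega
  obtain ⟨u, hu⟩ := FiniteField.exists_nonsquare h2
  have hu0 : u ≠ 0 := by rintro rfl; exact hu (IsSquare.zero)
  set n := Fintype.card K / 2 with hn
  have hun : u ^ n = -1 := by
    rcases FiniteField.pow_dichotomy h2 hu0 with h | h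
    · exact absurd ((FiniteField.isSquare_iff h2 hu0).mpr h) hu
    · exact h
  set S : Set K := {z : K | z ≠ 0 ∧ IsSquare z} with hS
  set N : Set K := {z : K | z ≠ 0 ∧ ¬ IsSquare z} with hNdef
  have hN : N = (fun z => u * z) '' S := by
    ext z
    simp only [hNdef, hS, Set.mem_setOf_eq, Set.mem_image]
    constructor
    · rintro ⟨hz0, hz⟩
      refine ⟨u⁻¹ * z, ⟨mul_ne_zero (inv_ne_zero hu0) hz0, ?_⟩, by field_simp⟩
      have hzn : z ^ n = -1 := by
        rcases FiniteField.pow_dichotomy h2 hz0 with h | h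
        · exact absurd ((FiniteField.isSquare_iff h2 hz0).mpr h) hz
        · exact h
      rw [FiniteField.isSquare_iff h2 (mul_ne_zero (inv_ne_zero hu0) hz0)]
      rw [mul_pow, inv_pow, hun, hzn]
      norm_num
    · rintro ⟨s, ⟨hs0, hs⟩, rfl⟩
      refine ⟨mul_ne_zero hu0 hs0, fun hsq => hu ?_⟩
      have hsn : s ^ n = 1 := (FiniteField.isSquare_iff h2 hs0).mp hs
      have husn : (u * s) ^ n = 1 := (FiniteField.isSquare_iff h2 (mul_ne_zero hu0 hs0)).mp hsq
      rw [mul_pow, hsn, mul_one] at husn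
      exact (FiniteField.isSquare_iff h2 hu0).mpr husn
  have hcard : S.ncard = N.ncard := by
    rw [hN, Set.ncard_image_of_injective _ (mul_right_injective₀ hu0)]
  have hdisj : Disjoint S N := by
    rw [Set.disjoint_left]
    rintro z ⟨-, hz⟩ ⟨-, hz'⟩
    exact hz' hz
  have hunion : S ∪ N = ({0}ᶜ : Set K) := by
    ext z
    simp only [hS, hNdef, Set.mem_union, Set.mem_setOf_eq, Set.mem_compl_iff,
      Set.mem_singleton_iff]
    by_cases hz : z = 0 <;> by_cases hsq : IsSquare z <;> tauto
  have hcompl : (({0}ᶜ : Set K)).ncard = Fintype.card K - 1 := by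
    have := Set.ncard_add_ncard_compl ({0} : Set K)
    rw [Set.ncard_singleton, Nat.card_eq_fintype_card] at this
    omega
  have hsum : S.ncard + N.ncard = Fintype.card K - 1 := by
    rw [← Set.ncard_union_eq hdisj (Set.toFinite _) (Set.toFinite _), hunion, hcompl]
  obtain ⟨k, hk⟩ := hodd
  constructor <;> omega

/-- for `ω^t ∉ F_q` and each `i ∈ {0,1}`, the set
`{x ∈ ω^t·F_q^× : Tr_{F_{q²}/F_q}(x·ω^{(q+1)/2}) ∈ C_i^{(2,q)}}` has exactly `(q−1)/2`
elements (Remark 6.5 of the paper). -/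
theorem stmt_19 (q : ℕ) (hq : IsPrimePow q) (hqodd : Odd q)
    (F F2 : Type) [Field F] [Fintype F] [Field F2] [Fintype F2] [Algebra F F2]
    (hF : Fintype.card F = q) (hF2 : Fintype.card F2 = q ^ 2)
    (ω : F2ˣ) (hω : ∀ x : F2ˣ, x ∈ Subgroup.zpowers ω)
    (tr : F2 → F) (htr : ∀ x : F2, algebraMap F F2 (tr x) = x + x ^ q)
    (t : ℤ) (ht : ((ω ^ t : F2ˣ) : F2) ∉ Set.range (algebraMap F F2)) :
    ({x : F2 | (∃ y : F, y ≠ 0 ∧ x = ((ω ^ t : F2ˣ) : F2) * algebraMap F F2 y) ∧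
        (tr (x * ((ω ^ ((q + 1) / 2) : F2ˣ) : F2)) ≠ 0 ∧
          IsSquare (tr (x * ((ω ^ ((q + 1) / 2) : F2ˣ) : F2))))}).ncard = (q - 1) / 2 ∧
    ({x : F2 | (∃ y : F, y ≠ 0 ∧ x = ((ω ^ t : F2ˣ) : F2) * algebraMap F F2 y) ∧
        (tr (x * ((ω ^ ((q + 1) / 2) : F2ˣ) : F2)) ≠ 0 ∧
          ¬ IsSquare (tr (x * ((ω ^ ((q + 1) / 2) : F2ˣ) : F2))))}).ncard = (q - 1) / 2 := by
  classical
  obtain ⟨k, hk⟩ := hqodd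
  have hq2 : 2 ≤ q := hF ▸ Fintype.one_lt_card
  have hk1 : 1 ≤ k := by omega
  set a : F2 := ((ω ^ t : F2ˣ) : F2) with ha
  set b : F2 := ((ω ^ ((q + 1) / 2) : F2ˣ) : F2) with hb
  have ha0 : a ≠ 0 := Units.ne_zero _
  have hb0 : b ≠ 0 := Units.ne_zero _
  have hinj : Function.Injective (algebraMap F F2) := RingHom.injective _
  -- order of ω
  have hord : orderOf ω = q ^ 2 - 1 := by
    rw [orderOf_eq_card_of_forall_mem_zpowers hω, Nat.card_units, Nat.card_eq_fintype_card, hF2]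
  have hq2k : q ^ 2 = 4 * k ^ 2 + 4 * k + 1 := by rw [hk]; ring
  -- ω ^ ((q²-1)/2) = -1
  have hm : (q + 1) / 2 * (q - 1) = (q ^ 2 - 1) / 2 := by
    rw [hk]
    have : (2 * k + 1) ^ 2 = 4 * k ^ 2 + 4 * k + 1 := by ring
    rw [this]
    have h1 : (2 * k + 1 + 1) / 2 = k + 1 := by omega
    rw [h1]
    have : (k + 1) * (2 * k + 1 - 1) = 2 * k ^ 2 + 2 * k := by
      have : 2 * k + 1 - 1 = 2 * k := by omega
      rw [this]; ring
    rw [this]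
    have : 4 * k ^ 2 + 4 * k + 1 - 1 = 2 * (2 * k ^ 2 + 2 * k) := by ring_nf; omega
    omega
  have hdelta : ((ω ^ ((q ^ 2 - 1) / 2) : F2ˣ) : F2) = -1 := by
    have hsq : ((ω ^ ((q ^ 2 - 1) / 2) : F2ˣ) : F2) ^ 2 = 1 := by
      rw [← Units.val_pow_eq_pow_val, ← pow_mul]
      have h12 : (q ^ 2 - 1) / 2 * 2 = q ^ 2 - 1 := by
        rw [hq2k]; omega
      rw [h12, ← hord, pow_orderOf_eq_one]
      rfl
    have hne : ((ω ^ ((q ^ 2 - 1) / 2) : F2ˣ) : F2) ≠ 1 := by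
      intro h
      have hu1 : (ω ^ ((q ^ 2 - 1) / 2) : F2ˣ) = 1 := Units.ext h
      have := orderOf_dvd_of_pow_eq_one hu1
      rw [hord] at this
      have hlt : (q ^ 2 - 1) / 2 < q ^ 2 - 1 := by rw [hq2k]; omega
      have hpos : 0 < (q ^ 2 - 1) / 2 := by rw [hq2k]; omega
      exact absurd (Nat.le_of_dvd hpos this) (by omega)
    rcases sq_eq_one_iff.mp hsq with h | h
    · exact absurd h hne
    · exact h
  -- b ^ q = -b
  have hbq : b ^ q = -b := by
    have hbq1 : b ^ (q - 1) = -1 := by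
      rw [hb, ← Units.val_pow_eq_pow_val, ← pow_mul, hm, hdelta]
    have : b ^ q = b ^ (q - 1) * b := by
      rw [← pow_succ]
      congr 1
      omega
    rw [this, hbq1]; ring
  -- a ^ q ≠ a
  have haq : a ^ q ≠ a := by
    intro h
    exact ht (my_fixed_mem_range F F2 hF a h)
  -- algebraMap fixes under q-power
  have halg : ∀ y : F, (algebraMap F F2 y) ^ q = algebraMap F F2 y := by
    intro y
    rw [← map_pow]
    congr 1
    rw [← hF]
    exact FiniteField.pow_card y
  set c : F := tr (a * b) with hc
  have hcab : algebraMap F F2 c = b * (a - a ^ q) := by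
    rw [hc, htr, mul_pow, hbq]
    ring
  have hc0 : c ≠ 0 := by
    intro h
    rw [h, map_zero] at hcab
    have := (mul_eq_zero.mp hcab.symm).resolve_left hb0
    exact haq (by linear_combination -this)
  -- trace computation
  have htrc : ∀ y : F, tr ((a * algebraMap F F2 y) * b) = y * c := by
    intro y
    apply hinj
    rw [map_mul, hcab, htr, mul_pow, mul_pow, halg, hbq]
    ring
  -- the key counting reduction
  have key : ∀ Q : F → Prop,
      ({x : F2 | (∃ y : F, y ≠ 0 ∧ x = a * algebraMap F F2 y) ∧
          (tr (x * b) ≠ 0 ∧ Q (tr (x * b)))}).ncard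
        = ({z : F | z ≠ 0 ∧ Q z}).ncard := by
    intro Q
    have hset : {x : F2 | (∃ y : F, y ≠ 0 ∧ x = a * algebraMap F F2 y) ∧
          (tr (x * b) ≠ 0 ∧ Q (tr (x * b)))}
        = (fun y : F => a * algebraMap F F2 y) '' {y : F | y * c ≠ 0 ∧ Q (y * c)} := by
      ext x
      simp only [Set.mem_setOf_eq, Set.mem_image]
      constructor
      · rintro ⟨⟨y, hy0, rfl⟩, h1, h2⟩
        rw [htrc y] at h1 h2
        exact ⟨y, ⟨h1, h2⟩, rfl⟩
      · rintro ⟨y, ⟨h1, h2⟩, rfl⟩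
        refine ⟨⟨y, left_ne_zero_of_mul h1, rfl⟩, ?_, ?_⟩ <;> rw [htrc y]
        · exact h1
        · exact h2
    rw [hset, Set.ncard_image_of_injective _
      (fun y₁ y₂ h => hinj (mul_left_cancel₀ ha0 h))]
    have hset2 : {y : F | y * c ≠ 0 ∧ Q (y * c)}
        = (fun z : F => z * c⁻¹) '' {z : F | z ≠ 0 ∧ Q z} := by
      ext y
      simp only [Set.mem_setOf_eq, Set.mem_image]
      constructor
      · rintro ⟨h1, h2⟩
        exact ⟨y * c, ⟨h1, h2⟩, by field_simp⟩
      · rintro ⟨z, ⟨h1, h2⟩, rfl⟩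
        have : z * c⁻¹ * c = z := by field_simp
        rw [this]
        exact ⟨h1, h2⟩
    rw [hset2, Set.ncard_image_of_injective _ (mul_left_injective₀ (inv_ne_zero hc0))]
  have hoddF : Odd (Fintype.card F) := by rw [hF]; exact ⟨k, hk⟩
  obtain ⟨hs, hn⟩ := my_card_squares F hoddF
  rw [hF] at hs hn
  exact ⟨(key (fun z => IsSquare z)).trans hs, (key (fun z => ¬ IsSquare z)).trans hn⟩
end
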